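/- Let d >= 2 and define g(x) = 2 * sum_{i=1}^d sqrt(1 + x_i) on X = [0,1]^d. Then: (i) g is not quasi-convex on X (in particular, for d = 2, taking x = (0,1) and x' = (1,0) gives g(x/2 + x'/2) = 2*sqrt(6) > 2*(1 + sqrt(2)) = max(g(x), g(x'))); and (ii) the problem min_{x in X} g(x) is variationally coherent with unique minimizer 0: indeed <grad g(x), x - 0> = sum_{i=1}^d x_i / sqrt(1 + x_i) > 0 for all x in [0,1]^d with x != 0. -/

import Mathlib

open scoped RealInnerProductSpace

lemma grad_aux {d : ℕ} (x : EuclideanSpace ℝ (Fin d)) (hx : ∀ i, 0 ≤ x i) :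
    HasGradientAt (fun x : EuclideanSpace ℝ (Fin d) => 2 * ∑ i, Real.sqrt (1 + x i))
      ((WithLp.equiv 2 _).symm (fun i => 1 / Real.sqrt (1 + x i))) x := by
  have h1 : ∀ i : Fin d, HasFDerivAt (fun y : EuclideanSpace ℝ (Fin d) => Real.sqrt (1 + y i))
      ((1 / (2 * Real.sqrt (1 + x i))) • (EuclideanSpace.proj i : EuclideanSpace ℝ (Fin d) →L[ℝ] ℝ)) x := by
    intro i
    have hxi := hx i
    have hne : (1 + x i) ≠ 0 := by positivity
    have hs := Real.hasDerivAt_sqrt hne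
    have hlin : HasFDerivAt (fun y : EuclideanSpace ℝ (Fin d) => 1 + y i)
        (EuclideanSpace.proj i : EuclideanSpace ℝ (Fin d) →L[ℝ] ℝ) x :=
      by
        have h := (EuclideanSpace.proj i : EuclideanSpace ℝ (Fin d) →L[ℝ] ℝ).hasFDerivAt (x := x)
        have h' : HasFDerivAt (fun y : EuclideanSpace ℝ (Fin d) => y i)
            (EuclideanSpace.proj i : EuclideanSpace ℝ (Fin d) →L[ℝ] ℝ) x := by convert h using 2; rfl
        simpa using h'.const_add (1:ℝ)
    exact hs.comp_hasFDerivAt x hlin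
  have h2 : HasFDerivAt (fun y : EuclideanSpace ℝ (Fin d) => ∑ i, Real.sqrt (1 + y i))
      (∑ i, (1 / (2 * Real.sqrt (1 + x i))) • (EuclideanSpace.proj i : EuclideanSpace ℝ (Fin d) →L[ℝ] ℝ)) x := by
    simpa using HasFDerivAt.fun_sum (fun i _ => h1 i)
  have h3 := h2.const_mul (2:ℝ)
  rw [hasGradientAt_iff_hasFDerivAt]
  convert h3 using 1
  · rfl
  ext v
  simp [PiLp.inner_apply, Finset.mul_sum, Finset.sum_apply, WithLp.equiv_symm_apply, PiLp.toLp_apply,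
    RCLike.inner_apply, Equiv.refl_apply, div_eq_mul_inv, mul_comm, mul_assoc, mul_left_comm]

/-- For `d ≥ 2`, the function `g(x) = 2 ∑ᵢ √(1 + xᵢ)` on `X = [0,1]^d` is not
quasi-convex, yet the problem `min_{x ∈ X} g(x)` is variationally coherent with unique
minimizer `0`: the argmin set is `{0}` and `⟪∇g(x), x - 0⟫ = ∑ᵢ xᵢ/√(1 + xᵢ) > 0` for all
`x ∈ [0,1]^d` with `x ≠ 0`. -/
theorem sqrt_sum_example_not_quasiconvex_but_coherent {d : ℕ} (hd : 2 ≤ d)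
    (X : Set (EuclideanSpace ℝ (Fin d)))
    (hX : X = {x : EuclideanSpace ℝ (Fin d) | ∀ i, x i ∈ Set.Icc (0:ℝ) 1})
    (g : EuclideanSpace ℝ (Fin d) → ℝ)
    (hg : ∀ x, g x = 2 * ∑ i, Real.sqrt (1 + x i)) :
    (¬ ∀ x ∈ X, ∀ x' ∈ X, ∀ t ∈ Set.Icc (0:ℝ) 1,
        g (t • x + (1 - t) • x') ≤ max (g x) (g x')) ∧
    {x ∈ X | ∀ y ∈ X, g x ≤ g y} = {0} ∧
    (∀ x ∈ X, ⟪gradient g x, x - 0⟫ = ∑ i, x i / Real.sqrt (1 + x i)) ∧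
    (∀ x ∈ X, x ≠ 0 → 0 < ∑ i, x i / Real.sqrt (1 + x i)) := by
  have hg' : g = fun x : EuclideanSpace ℝ (Fin d) => 2 * ∑ i, Real.sqrt (1 + x i) :=
    funext hg
  subst hX
  refine ⟨?_, ?_, ?_, ?_⟩
  · -- not quasi-convex
    intro h
    set i0 : Fin d := ⟨0, by omega⟩
    set i1 : Fin d := ⟨1, by omega⟩
    have hne : i0 ≠ i1 := by simp [i0, i1, Fin.ext_iff]
    set u : EuclideanSpace ℝ (Fin d) := (WithLp.equiv 2 _).symm (fun i => if i = i0 then (1:ℝ) else 0) with hu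
    set u' : EuclideanSpace ℝ (Fin d) := (WithLp.equiv 2 _).symm (fun i => if i = i1 then (1:ℝ) else 0) with hu'
    have hui : ∀ i, u i = if i = i0 then (1:ℝ) else 0 := fun i => rfl
    have hui' : ∀ i, u' i = if i = i1 then (1:ℝ) else 0 := fun i => rfl
    have huX : u ∈ {x : EuclideanSpace ℝ (Fin d) | ∀ i, x i ∈ Set.Icc (0:ℝ) 1} := by
      intro i; rw [hui]; split <;> norm_num
    have huX' : u' ∈ {x : EuclideanSpace ℝ (Fin d) | ∀ i, x i ∈ Set.Icc (0:ℝ) 1} := by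
      intro i; rw [hui']; split <;> norm_num
    have ht : (1/2 : ℝ) ∈ Set.Icc (0:ℝ) 1 := by norm_num
    have key := h u huX u' huX' (1/2) ht
    have hmid : ∀ i, ((1/2 : ℝ) • u + (1 - 1/2 : ℝ) • u') i
        = (if i = i0 then (1/2:ℝ) else 0) + (if i = i1 then (1/2:ℝ) else 0) := by
      intro i
      simp only [PiLp.add_apply, PiLp.smul_apply, hui, hui', smul_eq_mul]
      split <;> split <;> norm_num
    have hsum_u : ∑ i, Real.sqrt (1 + u i) = (d : ℝ) + (Real.sqrt 2 - 1) := by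
      have : ∀ i : Fin d, Real.sqrt (1 + u i) = 1 + (if i = i0 then Real.sqrt 2 - 1 else 0) := by
        intro i; rw [hui]; split <;> norm_num
      rw [Finset.sum_congr rfl (fun i _ => this i), Finset.sum_add_distrib]
      simp
    have hsum_u' : ∑ i, Real.sqrt (1 + u' i) = (d : ℝ) + (Real.sqrt 2 - 1) := by
      have : ∀ i : Fin d, Real.sqrt (1 + u' i) = 1 + (if i = i1 then Real.sqrt 2 - 1 else 0) := by
        intro i; rw [hui']; split <;> norm_num
      rw [Finset.sum_congr rfl (fun i _ => this i), Finset.sum_add_distrib]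
      simp
    have hsum_mid : ∑ i, Real.sqrt (1 + ((1/2 : ℝ) • u + (1 - 1/2 : ℝ) • u') i)
        = (d : ℝ) + 2 * (Real.sqrt (3/2) - 1) := by
      have : ∀ i : Fin d, Real.sqrt (1 + ((1/2 : ℝ) • u + (1 - 1/2 : ℝ) • u') i)
          = 1 + ((if i = i0 then Real.sqrt (3/2) - 1 else 0)
              + (if i = i1 then Real.sqrt (3/2) - 1 else 0)) := by
        intro i
        rw [hmid i]
        rcases eq_or_ne i i0 with h0 | h0 <;> rcases eq_or_ne i i1 with h1 | h1
        · exact absurd (h0 ▸ h1) hne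
        · rw [if_pos h0, if_neg h1, if_pos h0, if_neg h1,
            show (1:ℝ) + (1/2 + 0) = 3/2 by norm_num]
          ring
        · rw [if_neg h0, if_pos h1, if_neg h0, if_pos h1,
            show (1:ℝ) + (0 + 1/2) = 3/2 by norm_num]
          ring
        · rw [if_neg h0, if_neg h1, if_neg h0, if_neg h1]
          norm_num
      rw [Finset.sum_congr rfl (fun i _ => this i), Finset.sum_add_distrib,
        Finset.sum_add_distrib]
      simp; ring
    simp only [hg, hsum_u, hsum_u', hsum_mid, max_self] at key
    have h32 : Real.sqrt (3/2) ^ 2 = 3/2 := Real.sq_sqrt (by norm_num)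
    have h2' : Real.sqrt 2 ^ 2 = 2 := Real.sq_sqrt (by norm_num)
    have hk : 2 * Real.sqrt (3/2) ≤ Real.sqrt 2 + 1 := by linarith
    have hnn : 0 ≤ Real.sqrt 2 + 1 := by positivity
    have := mul_self_le_mul_self (by positivity) hk
    nlinarith [this, h32, h2', Real.sqrt_nonneg (2:ℝ)]
  · -- argmin = {0}
    ext y
    simp only [Set.mem_setOf_eq, Set.mem_sep_iff, Set.mem_singleton_iff]
    constructor
    · rintro ⟨hyX, hmin⟩
      have h0X : (0 : EuclideanSpace ℝ (Fin d)) ∈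
          {x : EuclideanSpace ℝ (Fin d) | ∀ i, x i ∈ Set.Icc (0:ℝ) 1} := by
        intro i; simp
      have hle := hmin 0 h0X
      by_contra hy0
      have : ∃ i, y i ≠ 0 := by
        by_contra hall
        push_neg at hall
        exact hy0 (by ext i; exact hall i)
      obtain ⟨i, hi⟩ := this
      have hipos : 0 < y i := lt_of_le_of_ne (hyX i).1 (Ne.symm hi)
      have hlt : (∑ j, Real.sqrt (1 + (0 : EuclideanSpace ℝ (Fin d)) j))
          < ∑ j, Real.sqrt (1 + y j) := by
        refine Finset.sum_lt_sum (fun j _ => ?_) ⟨i, Finset.mem_univ i, ?_⟩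
        · have hz : (0 : EuclideanSpace ℝ (Fin d)) j = 0 := rfl
          rw [hz]
          exact Real.sqrt_le_sqrt (by linarith [(hyX j).1])
        · have hz : (0 : EuclideanSpace ℝ (Fin d)) i = 0 := rfl
          rw [hz]
          exact Real.sqrt_lt_sqrt (by norm_num) (by linarith)
      simp only [hg] at hle
      linarith
    · rintro rfl
      refine ⟨fun i => by simp, fun z hz => ?_⟩
      rw [hg z, hg 0]
      have : ∀ j : Fin d, Real.sqrt (1 + (0 : EuclideanSpace ℝ (Fin d)) j) ≤ Real.sqrt (1 + z j) := by
        intro j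
        exact Real.sqrt_le_sqrt (by have := (hz j).1; simp; linarith)
      have h2 := Finset.sum_le_sum (s := Finset.univ) (fun j (_ : j ∈ Finset.univ) => this j)
      linarith
  · -- gradient inner product
    intro x hx
    have hgr := grad_aux x (fun i => (hx i).1)
    rw [hg'] at *
    rw [hgr.gradient]
    simp only [sub_zero]
    rw [PiLp.inner_apply]
    apply Finset.sum_congr rfl
    intro i _
    simp [WithLp.equiv_symm_apply, PiLp.toLp_apply, RCLike.inner_apply, div_eq_mul_inv, mul_comm]
  · -- positivity
    intro x hx hne
    have : ∃ i, x i ≠ 0 := by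
      by_contra hall
      push_neg at hall
      exact hne (by ext i; exact hall i)
    obtain ⟨i, hi⟩ := this
    have hipos : 0 < x i := lt_of_le_of_ne (hx i).1 (Ne.symm hi)
    refine Finset.sum_pos' (fun j _ => ?_) ⟨i, Finset.mem_univ i, ?_⟩
    · have h0 := (hx j).1
      positivity
    · positivity
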